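/- Let a, T, D be real with a ≠ 0, and let W(y) = Dy² - aTy + a². Suppose P is a real analytic function defined near 0 with P(0) = 0, P'(0) = -1, P(y₀) < 0 for small y₀ > 0, satisfying the differential equation P'(y₀)·P(y₀)·W(y₀) = y₀·W(P(y₀)). Then the Taylor expansion of P at 0 begins P(y₀) = -y₀ - (2T/(3a))y₀² - (4T²/(9a²))y₀³ + O(y₀⁴). -/

import Mathlib

open Real Set Filter Asymptotics Nat

private theorem coeff_mul_factorial {f : ℝ → ℝ} {p : FormalMultilinearSeries ℝ ℝ ℝ}
    (hp : HasFPowerSeriesAt f p 0) (n : ℕ) :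
    (n ! : ℝ) * p.coeff n = iteratedDeriv n f 0 := by
  obtain ⟨r, hr⟩ := hp
  have h := hr.factorial_smul (1 : ℝ) n
  rw [iteratedDeriv_eq_iteratedFDeriv, ← h, nsmul_eq_mul]
  rfl

private theorem taylor_isBigO {f : ℝ → ℝ} {p : FormalMultilinearSeries ℝ ℝ ℝ}
    (hp : HasFPowerSeriesAt f p 0) (n : ℕ) :
    (fun y => f y - ∑ k ∈ Finset.range n, p.coeff k * y ^ k) =O[nhds 0] fun y => y ^ n := by
  have h := hp.isBigO_sub_partialSum_pow n
  simp only [zero_add] at h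
  have h2 : (fun y : ℝ => ‖y‖ ^ n) =O[nhds 0] fun y => y ^ n := by
    apply isBigO_of_le
    intro x
    simp [abs_pow]
  refine (h.trans h2).congr (fun y => ?_) (fun _ => rfl)
  congr 1
  rw [FormalMultilinearSeries.partialSum]
  refine Finset.sum_congr rfl fun k _ => ?_
  rw [FormalMultilinearSeries.apply_eq_pow_smul_coeff, smul_eq_mul, mul_comm]

private theorem coeffs_zero {A B : ℝ}
    (h : (fun y : ℝ => A * y ^ 2 + B * y ^ 3) =O[nhds 0] fun y => y ^ 4) :
    A = 0 ∧ B = 0 := by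
  have hA : A = 0 := by
    have h2 : (fun y : ℝ => A * y ^ 2 + B * y ^ 3) =o[nhds 0] fun y => y ^ 2 :=
      h.trans_isLittleO (isLittleO_pow_pow (by norm_num))
    have ht : Tendsto (fun y : ℝ => (A * y ^ 2 + B * y ^ 3) / y ^ 2)
        (nhdsWithin (0:ℝ) {(0:ℝ)}ᶜ) (nhds 0) :=
      Tendsto.mono_left h2.tendsto_div_nhds_zero nhdsWithin_le_nhds
    have ht2 : Tendsto (fun y : ℝ => A + B * y) (nhdsWithin (0:ℝ) {(0:ℝ)}ᶜ) (nhds A) := by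
      have h3 : Tendsto (fun y : ℝ => A + B * y) (nhds 0) (nhds (A + B * 0)) :=
        (continuous_const.add (continuous_const.mul continuous_id)).tendsto 0
      simpa using Tendsto.mono_left h3 nhdsWithin_le_nhds
    have heq : (fun y : ℝ => (A * y ^ 2 + B * y ^ 3) / y ^ 2)
        =ᶠ[nhdsWithin (0:ℝ) {(0:ℝ)}ᶜ] fun y => A + B * y := by
      filter_upwards [self_mem_nhdsWithin] with y hy
      have hy0 : y ≠ 0 := hy
      field_simp
    exact (tendsto_nhds_unique (ht2.congr' heq.symm) ht)
  subst hA
  refine ⟨rfl, ?_⟩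
  have h3 : (fun y : ℝ => (0:ℝ) * y ^ 2 + B * y ^ 3) =o[nhds 0] fun y => y ^ 3 :=
    h.trans_isLittleO (isLittleO_pow_pow (by norm_num))
  have ht : Tendsto (fun y : ℝ => ((0:ℝ) * y ^ 2 + B * y ^ 3) / y ^ 3)
      (nhdsWithin (0:ℝ) {(0:ℝ)}ᶜ) (nhds 0) :=
    Tendsto.mono_left h3.tendsto_div_nhds_zero nhdsWithin_le_nhds
  have heq : (fun y : ℝ => ((0:ℝ) * y ^ 2 + B * y ^ 3) / y ^ 3)
      =ᶠ[nhdsWithin (0:ℝ) {(0:ℝ)}ᶜ] fun _ => B := by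
    filter_upwards [self_mem_nhdsWithin] with y hy
    have hy0 : y ≠ 0 := hy
    field_simp
    ring
  exact tendsto_nhds_unique (tendsto_const_nhds.congr' heq.symm) ht

theorem taylor_halfmap_origin (a T D : ℝ) (ha : a ≠ 0)
    (W : ℝ → ℝ) (hW : ∀ y, W y = D * y ^ 2 - a * T * y + a ^ 2)
    (P : ℝ → ℝ) (hPanal : AnalyticAt ℝ P 0) (hP0 : P 0 = 0)
    (hP'0 : deriv P 0 = -1)
    (hPneg : ∀ᶠ y₀ in nhdsWithin 0 (Set.Ioi 0), P y₀ < 0)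
    (hODE : ∀ᶠ y₀ in nhds 0, deriv P y₀ * P y₀ * W y₀ = y₀ * W (P y₀)) :
    (fun y₀ : ℝ =>
        P y₀ - (-y₀ - (2 * T / (3 * a)) * y₀ ^ 2 - (4 * T ^ 2 / (9 * a ^ 2)) * y₀ ^ 3))
      =O[nhds 0] fun y₀ : ℝ => y₀ ^ 4 := by
  obtain ⟨p, hp⟩ := hPanal
  obtain ⟨b, hbdef⟩ : ∃ b, p.coeff 2 = b := ⟨_, rfl⟩
  obtain ⟨c, hcdef⟩ : ∃ c, p.coeff 3 = c := ⟨_, rfl⟩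
  have hc0 : p.coeff 0 = 0 := by
    exact (hp.coeff_zero 1).trans hP0
  have hc1 : p.coeff 1 = -1 := by
    have := hp.deriv
    rw [hP'0] at this
    exact this.symm
  -- remainder of P
  have hR : (fun y => P y - (-y + b * y ^ 2 + c * y ^ 3)) =O[nhds 0] fun y : ℝ => y ^ 4 := by
    have h := taylor_isBigO hp 4
    refine h.congr (fun y => ?_) (fun _ => rfl)
    simp [Finset.sum_range_succ, hc0, hc1, hbdef, hcdef]
  have hP1 : (fun y => P y) =O[nhds 0] fun y : ℝ => y := by
    have h := taylor_isBigO hp 1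
    refine h.congr (fun y => ?_) (fun y => by ring)
    simp [hc0]
  -- derivative of P is analytic, with related coefficients
  have hdanal : AnalyticAt ℝ (deriv P) 0 := by
    have h1 : AnalyticAt ℝ (fderiv ℝ P) 0 := hp.analyticAt.fderiv
    have h2 : AnalyticAt ℝ (fun x => (ContinuousLinearMap.apply ℝ ℝ (1:ℝ)) (fderiv ℝ P x)) 0 :=
      ((ContinuousLinearMap.apply ℝ ℝ (1:ℝ)).analyticAt _).comp h1
    refine h2.congr (Filter.Eventually.of_forall fun x => ?_)
    simp [ContinuousLinearMap.apply, fderiv_apply_one_eq_deriv]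
  obtain ⟨q, hq⟩ := hdanal
  have key : ∀ n : ℕ, (n ! : ℝ) * q.coeff n = ((n+1)! : ℝ) * p.coeff (n+1) := by
    intro n
    rw [coeff_mul_factorial hq, coeff_mul_factorial hp]
    rw [iteratedDeriv_succ']
  have hq1 : q.coeff 1 = 2 * b := by
    have h := key 1
    norm_num [Nat.factorial] at h
    rw [← hbdef]; linarith
  have hq2 : q.coeff 2 = 3 * c := by
    have h := key 2
    norm_num [Nat.factorial] at h
    rw [← hcdef]; linarith
  have hq0 : q.coeff 0 = -1 := by
    exact (hq.coeff_zero 1).trans hP'0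
  have hS : (fun y => deriv P y - (-1 + 2 * b * y + 3 * c * y ^ 2)) =O[nhds 0]
      fun y : ℝ => y ^ 3 := by
    have h := taylor_isBigO hq 3
    refine h.congr (fun y => ?_) (fun _ => rfl)
    simp [Finset.sum_range_succ, hq0, hq1, hq2]
  -- bounded factors
  have hWb : W =O[nhds 0] (fun _ : ℝ => (1:ℝ)) := by
    have hWc : Continuous W := by
      have : W = fun y => D * y ^ 2 - a * T * y + a ^ 2 := funext hW
      rw [this]; fun_prop
    exact (hWc.tendsto 0).isBigO_one (F := ℝ)
  have hq'b : (fun y : ℝ => -1 + 2 * b * y + 3 * c * y ^ 2) =O[nhds 0] (fun _ : ℝ => (1:ℝ)) := by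
    exact (Continuous.tendsto (by fun_prop) 0).isBigO_one (F := ℝ)
  have hPcont : ContinuousAt P 0 := hp.analyticAt.continuousAt
  have hDPq : (fun y : ℝ => D * (P y + (-y + b * y ^ 2 + c * y ^ 3))) =O[nhds 0]
      (fun _ : ℝ => (1:ℝ)) := by
    refine Filter.Tendsto.isBigO_one (F := ℝ) (c := D * (P 0 + (-0 + b * 0 ^ 2 + c * 0 ^ 3))) ?_
    exact (continuousAt_const.mul (hPcont.add (by fun_prop))).tendsto
  have haTb : (fun _ : ℝ => a * T) =O[nhds 0] (fun _ : ℝ => (1:ℝ)) :=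
    tendsto_const_nhds.isBigO_one (F := ℝ)
  have hy1 : (fun y : ℝ => y) =O[nhds 0] (fun _ : ℝ => (1:ℝ)) :=
    (continuous_id.tendsto 0).isBigO_one (F := ℝ)
  have hgb : (fun y : ℝ => (5*a^2*b*c - 2*a*T*b^2 + 5*a*T*c - b*D)
      + (3*a^2*c^2 - 5*a*T*b*c + (b^2 - 2*c)*D)*y + (-3*a*T*c^2 + 3*b*c*D)*y^2
      + 2*c^2*D*y^3) =O[nhds 0] (fun _ : ℝ => (1:ℝ)) :=
    (Continuous.tendsto (by fun_prop) 0).isBigO_one (F := ℝ)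
  -- the five O(y^4) terms
  have t1 : (fun y => (deriv P y - (-1 + 2 * b * y + 3 * c * y ^ 2)) * (P y * W y))
      =O[nhds 0] fun y : ℝ => y ^ 4 :=
    (hS.mul (hP1.mul hWb)).congr (fun _ => rfl) (fun y => by ring)
  have t2 : (fun y => (-1 + 2 * b * y + 3 * c * y ^ 2) *
      ((P y - (-y + b * y ^ 2 + c * y ^ 3)) * W y)) =O[nhds 0] fun y : ℝ => y ^ 4 :=
    (hq'b.mul (hR.mul hWb)).congr (fun _ => rfl) (fun y => by ring)
  have t3 : (fun y => y * (D * (P y + (-y + b * y ^ 2 + c * y ^ 3)) *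
      (P y - (-y + b * y ^ 2 + c * y ^ 3)))) =O[nhds 0] fun y : ℝ => y ^ 4 :=
    (hy1.mul (hDPq.mul hR)).congr (fun _ => rfl) (fun y => by ring)
  have t4 : (fun y => y * (a * T * (P y - (-y + b * y ^ 2 + c * y ^ 3))))
      =O[nhds 0] fun y : ℝ => y ^ 4 :=
    (hy1.mul (haTb.mul hR)).congr (fun _ => rfl) (fun y => by ring)
  have t5 : (fun y : ℝ => y ^ 4 * ((5*a^2*b*c - 2*a*T*b^2 + 5*a*T*c - b*D)
      + (3*a^2*c^2 - 5*a*T*b*c + (b^2 - 2*c)*D)*y + (-3*a*T*c^2 + 3*b*c*D)*y^2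
      + 2*c^2*D*y^3)) =O[nhds 0] fun y : ℝ => y ^ 4 :=
    ((isBigO_refl (fun y : ℝ => y ^ 4) _).mul hgb).congr (fun _ => rfl) (fun y => by ring)
  have hEO := ((((t1.neg_left.sub t2).add t3).sub t4).sub t5)
  -- identify with the polynomial A₂ y² + A₃ y³ using the ODE
  have hkey : (fun y : ℝ => (-3*b*a^2 - 2*a*T) * y ^ 2 + ((2*b^2 - 4*c)*a^2 + 4*a*b*T) * y ^ 3)
      =O[nhds 0] fun y : ℝ => y ^ 4 := by
    refine hEO.congr' ?_ EventuallyEq.rfl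
    filter_upwards [hODE] with y hy
    simp only [hW] at hy ⊢
    linear_combination -hy
  obtain ⟨hA2, hA3⟩ := coeffs_zero hkey
  have e1 : 3 * a * b + 2 * T = 0 := by
    have h := mul_left_cancel₀ ha (show a * (3 * a * b + 2 * T) = a * 0 by
      linear_combination -hA2)
    simpa using h
  have h3a : (3 : ℝ) * a ≠ 0 := mul_ne_zero (by norm_num) ha
  have h9a : (9 : ℝ) * a ^ 2 ≠ 0 := mul_ne_zero (by norm_num) (pow_ne_zero 2 ha)
  have hb : 2 * T / (3 * a) = -b := by
    rw [div_eq_iff h3a]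
    linear_combination e1
  have hc : 4 * T ^ 2 / (9 * a ^ 2) = -c := by
    rw [div_eq_iff h9a]
    linear_combination ((3:ℝ)/2 * a * b + 2 * T) * e1 + (-(9:ℝ)/4) * hA3
  have hfun : (fun y₀ : ℝ =>
      P y₀ - (-y₀ - (2 * T / (3 * a)) * y₀ ^ 2 - (4 * T ^ 2 / (9 * a ^ 2)) * y₀ ^ 3))
      = fun y => P y - (-y + b * y ^ 2 + c * y ^ 3) := by
    funext y
    rw [hb, hc]
    ring
  rw [hfun]
  exact hR
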